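/- There exists a decomposable arithmetic circuit that computes a factor f but does not compute the marginals of f. Concretely, the circuit λ_aλ_b + λ_{¬a} over binary variables A, B is decomposable, computes the factor f with f(a,b)=1, f(a,¬b)=0, f(¬a,b)=1, f(¬a,¬b)=1, but its value at partial instantiation ¬a is 1 while the marginal f(¬a) = f(¬a,b)+f(¬a,¬b) = 2. -/
import Mathlib


/-- An arithmetic circuit over variables `ι` with values `α`: leaves are indicator
variables `λ_{i,v}` or real parameters; internal nodes are sums or products. -/
inductive AC (ι α : Type) : Type where
  | ind (i : ι) (v : α)
  | param (θ : ℝ)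
  | sum (l r : AC ι α)
  | prod (l r : AC ι α)

namespace AC

variable {ι α : Type} [Fintype ι] [DecidableEq ι] [Fintype α] [DecidableEq α]

/-- Evaluate the circuit under a circuit input `Λ` assigning 0/1 to each indicator. -/
def eval (Λ : ι → α → Bool) : AC ι α → ℝ
  | ind i v => if Λ i v then 1 else 0
  | param θ => θ
  | sum l r => l.eval Λ + r.eval Λ
  | prod l r => l.eval Λ * r.eval Λ

/-- Evaluate the maximizer circuit (sum nodes replaced by max nodes). -/
def evalMax (Λ : ι → α → Bool) : AC ι α → ℝ
  | ind i v => if Λ i v then 1 else 0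
  | param θ => θ
  | sum l r => max (l.evalMax Λ) (r.evalMax Λ)
  | prod l r => l.evalMax Λ * r.evalMax Λ

/-- The circuit input corresponding to a full instantiation `x`. -/
def inputOf (x : ι → α) : ι → α → Bool := fun i v => decide (x i = v)

/-- The circuit input corresponding to a partial instantiation `y`:
an indicator is set to 1 iff its value is compatible with `y`. -/
def pinputOf (y : ι → Option α) : ι → α → Bool := fun i v =>
  match y i with
  | none => true
  | some w => decide (w = v)

/-- The value `AC(x)` of the circuit at a full instantiation `x`. -/
def evalAt (x : ι → α) (c : AC ι α) : ℝ := c.eval (inputOf x)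

/-- The value `AC(y)` of the circuit at a partial instantiation `y`. -/
def evalP (y : ι → Option α) (c : AC ι α) : ℝ := c.eval (pinputOf y)

/-- Maximizer-circuit value at a full instantiation. -/
def evalMaxAt (x : ι → α) (c : AC ι α) : ℝ := c.evalMax (inputOf x)

/-- Maximizer-circuit value at a partial instantiation. -/
def evalMaxP (y : ι → Option α) (c : AC ι α) : ℝ := c.evalMax (pinputOf y)

/-- `vars n`: variables with some indicator at or under the node. -/
def vars : AC ι α → Finset ι
  | ind i _ => {i}
  | param _ => ∅
  | sum l r => l.vars ∪ r.vars
  | prod l r => l.vars ∪ r.vars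

/-- The multiset of parameters appearing in the circuit. -/
def params : AC ι α → Multiset ℝ
  | ind _ _ => 0
  | param θ => {θ}
  | sum l r => l.params + r.params
  | prod l r => l.params + r.params

/-- Decomposability: children of every `*`-node have disjoint variable sets. -/
def Decomposable : AC ι α → Prop
  | ind _ _ => True
  | param _ => True
  | sum l r => l.Decomposable ∧ r.Decomposable
  | prod l r => Disjoint l.vars r.vars ∧ l.Decomposable ∧ r.Decomposable

/-- Smoothness: every child of a `+`-node mentions the same variables as the node. -/
def Smooth : AC ι α → Prop
  | ind _ _ => True
  | param _ => True
  | sum l r => l.vars = r.vars ∧ l.Smooth ∧ r.Smooth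
  | prod l r => l.Smooth ∧ r.Smooth

/-- Determinism: under every full instantiation, every `+`-node has at most one
non-zero input. -/
def Deterministic : AC ι α → Prop
  | ind _ _ => True
  | param _ => True
  | sum l r => (∀ x : ι → α, l.evalAt x = 0 ∨ r.evalAt x = 0) ∧
      l.Deterministic ∧ r.Deterministic
  | prod l r => l.Deterministic ∧ r.Deterministic

/-- A full instantiation `x` is compatible with a partial instantiation `y`. -/
def Compat (x : ι → α) (y : ι → Option α) : Prop :=
  ∀ i, y i = none ∨ y i = some (x i)

instance (x : ι → α) (y : ι → Option α) : Decidable (Compat x y) := by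
  unfold Compat; infer_instance

/-- The graph of a full instantiation, i.e. its term `{(i, x i) | i}`. -/
def graphOf (x : ι → α) : Finset (ι × α) := Finset.univ.image fun i => (i, x i)

/-- The marginal `Σ_{x ∼ y} f(x)` of a factor `f` at a partial instantiation `y`. -/
def margSum (f : (ι → α) → ℝ) (y : ι → Option α) : ℝ :=
  ∑ x : ι → α, if Compat x y then f x else 0

/-- The circuit computes the factor `f`. -/
def Computes (c : AC ι α) (f : (ι → α) → ℝ) : Prop := ∀ x, c.evalAt x = f x

/-- The circuit computes the marginals of the factor `f`. -/
def ComputesMarginals (c : AC ι α) (f : (ι → α) → ℝ) : Prop :=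
  ∀ y : ι → Option α, c.evalP y = margSum f y

/-- The multiset of (term, coefficient) pairs of all complete subcircuits. -/
def subs : AC ι α → Multiset (Finset (ι × α) × ℝ)
  | ind i v => {({(i, v)}, 1)}
  | param θ => {(∅, θ)}
  | sum l r => l.subs + r.subs
  | prod l r => l.subs.bind fun a => r.subs.map fun b => (a.1 ∪ b.1, a.2 * b.2)

/-- Complete subcircuits of a circuit: choose one child of each `+`-node and all
children of each `*`-node. -/
inductive Sub : AC ι α → Type where
  | ind (i : ι) (v : α) : Sub (AC.ind i v)
  | param (θ : ℝ) : Sub (AC.param θ)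
  | sumL {l r : AC ι α} : Sub l → Sub (AC.sum l r)
  | sumR {l r : AC ι α} : Sub r → Sub (AC.sum l r)
  | prod {l r : AC ι α} : Sub l → Sub r → Sub (AC.prod l r)

/-- The term of a complete subcircuit: the set of indicator values appearing in it. -/
def Sub.term : {c : AC ι α} → Sub c → Finset (ι × α)
  | _, .ind i v => {(i, v)}
  | _, .param _ => ∅
  | _, .sumL s => s.term
  | _, .sumR s => s.term
  | _, .prod s t => s.term ∪ t.term

/-- The coefficient of a complete subcircuit: the product of its parameters. -/
def Sub.coeff : {c : AC ι α} → Sub c → ℝ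
  | _, .ind _ _ => 1
  | _, .param θ => θ
  | _, .sumL s => s.coeff
  | _, .sumR s => s.coeff
  | _, .prod s t => s.coeff * t.coeff


end AC


/-- The concrete circuit `λ_a λ_b + λ_{¬a}` over binary variables `A = 0`, `B = 1`
(value `true` standing for `a`, `b`). -/
def C4 : AC (Fin 2) Bool := .sum (.prod (.ind 0 true) (.ind 1 true)) (.ind 0 false)

/-- The factor with f(a,b)=1, f(a,¬b)=0, f(¬a,b)=1, f(¬a,¬b)=1. -/
def f4 : (Fin 2 → Bool) → ℝ := fun x => if x 0 = true ∧ x 1 = false then 0 else 1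

/-- The partial instantiation `¬a` (variable `B` unassigned). -/
def y4 : Fin 2 → Option Bool := fun i => if i = 0 then some false else none

/-- A decomposable circuit that computes a factor but not its marginals: it is
decomposable and computes `f4`, yet its value at partial instantiation `¬a` is `1`
while the marginal `f(¬a) = f(¬a,b) + f(¬a,¬b) = 2`; hence it does not compute the
marginals of `f4`. -/
theorem stmt4 :
    C4.Decomposable ∧ C4.Computes f4 ∧ C4.evalP y4 = 1 ∧ AC.margSum f4 y4 = 2 ∧
      ¬ C4.ComputesMarginals f4 := by
  have hd : C4.Decomposable := by
    constructor
    · refine ⟨?_, trivial, trivial⟩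
      simp [C4, AC.vars]
    · trivial
  have hc : C4.Computes f4 := by
    intro x
    simp only [C4, f4, AC.evalAt, AC.eval, AC.inputOf]
    rcases Bool.eq_false_or_eq_true (x 0) with h0 | h0 <;>
      rcases Bool.eq_false_or_eq_true (x 1) with h1 | h1 <;> simp [h0, h1]
  have hp : C4.evalP y4 = 1 := by
    simp [C4, AC.evalP, AC.eval, AC.pinputOf, y4]
  have hm : AC.margSum f4 y4 = 2 := by
    unfold AC.margSum
    rw [← (finTwoArrowEquiv Bool).symm.sum_comp]
    rw [Fintype.sum_prod_type]
    simp [Fintype.sum_bool, finTwoArrowEquiv, AC.Compat, y4, f4, Fin.forall_fin_two,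
      Matrix.cons_val_zero, Matrix.cons_val_one]
    norm_num
  exact ⟨hd, hc, hp, hm, fun h => by have := h y4; rw [hp, hm] at this; norm_num at this⟩
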